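/- Let n ≥ 3 be an integer and let S ⊆ V(Q_n) with |S| = k and Type(S) = t, where 0 < 2t ≤ k ≤ 2^{n−1} and 1/24 ≤ t/2^n ≤ 1/24 + 7/64. Then θ(n,S) ≥ 2^n · f(k/2^n), where f(x) = 3/4 − (64/7)(x − 1/2)^2. -/

import Mathlib

open Finset

/-- Two vertices of the hypercube `Q_n` are adjacent iff they differ in exactly one
coordinate. -/
def cubeEdge {n : ℕ} (u v : Fin n → Bool) : Prop :=
  (Finset.univ.filter (fun i => u i ≠ v i)).card = 1

instance {n : ℕ} (u v : Fin n → Bool) : Decidable (cubeEdge u v) := by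
  unfold cubeEdge; infer_instance

/-- `θ(n,S)`: the number of edges of `Q_n` with exactly one endpoint in `S`. -/
def edgeBoundary (n : ℕ) (S : Finset (Fin n → Bool)) : ℕ :=
  (Finset.univ.filter (fun p : (Fin n → Bool) × (Fin n → Bool) =>
    p.1 ∈ S ∧ p.2 ∉ S ∧ cubeEdge p.1 p.2)).card

/-- `θ(n,k) = min {θ(n,S) : S ⊆ V(Q_n), |S| = k}`. -/
noncomputable def thetaMin (n k : ℕ) : ℕ :=
  sInf {m | ∃ S : Finset (Fin n → Bool), S.card = k ∧ edgeBoundary n S = m}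

/-- The half plane `{x : x_i = a}` of `Q_n`. -/
def halfPlane (n : ℕ) (i : Fin n) (a : Bool) : Finset (Fin n → Bool) :=
  Finset.univ.filter (fun x => x i = a)

/-- `Type(S) = min_H |S ∩ H|`, minimum over the `2n` half planes of `Q_n`. -/
noncomputable def typeOf (n : ℕ) (S : Finset (Fin n → Bool)) : ℕ :=
  sInf {m | ∃ (i : Fin n) (a : Bool), (S ∩ halfPlane n i a).card = m}

/-- `θ(n,k,t) = min {θ(n,S) : |S| = k, Type(S) = t}`. -/
noncomputable def thetaMinType (n k t : ℕ) : ℕ :=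
  sInf {m | ∃ S : Finset (Fin n → Bool),
    S.card = k ∧ typeOf n S = t ∧ edgeBoundary n S = m}

/-- Graph distance on the cycle `C_m` with vertices labelled by naturals. -/
def cycleDist (m a b : ℕ) : ℕ := min (Nat.dist a b) (m - Nat.dist a b)

/-- The wirelength of an embedding `η` of `Q_n` into the cycle `C_{2^n}`:
the sum of cycle distances over all (unordered) edges of `Q_n`.  (The sum over
ordered pairs counts every edge twice, whence the division by `2`.) -/
def wirelength (n : ℕ) (η : (Fin n → Bool) → ℕ) : ℕ :=
  ((Finset.univ.filter (fun p : (Fin n → Bool) × (Fin n → Bool) =>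
    cubeEdge p.1 p.2)).sum (fun p => cycleDist (2^n) (η p.1) (η p.2))) / 2

/-- The reflected Gray code embedding `ξ_n(x) = (y)_2 + 1`, where
`y_i = (x_1 + ⋯ + x_i) mod 2`. -/
def xi (n : ℕ) (x : Fin n → Bool) : ℕ :=
  (Finset.univ.sum (fun i : Fin n =>
    ((Finset.univ.filter (fun j : Fin n => j ≤ i ∧ x j = true)).card % 2)
      * 2 ^ (n - 1 - (i : ℕ)))) + 1

/-- `f(x) = 3/4 − (64/7)(x − 1/2)²`. -/
noncomputable def fGuu (x : ℝ) : ℝ := 3/4 - 64/7 * (x - 1/2)^2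

/-- `takDelta i` is `Δ_{i+1}`: `Δ_1(x) = 1/2 − |x − 1/2|`,
`Δ_{n}(x) = (1/2)Δ_{n−1}(2x − ⌊2x⌋)`. -/
noncomputable def takDelta : ℕ → ℝ → ℝ
  | 0, x => 1/2 - |x - 1/2|
  | n+1, x => takDelta n (2*x - (⌊2*x⌋ : ℝ)) / 2

/-- `m_n(x) = Σ_{i=1}^n Δ_i(x)`, the n-th partial sum of the Takagi function. -/
noncomputable def mTakagi (n : ℕ) (x : ℝ) : ℝ := ∑ i ∈ Finset.range n, takDelta i x

/-- `y_N = ⌈2^N/24⌉ / 2^N`. -/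
noncomputable def yGuu (N : ℕ) : ℝ := (⌈(2^N : ℝ)/24⌉ : ℝ) / 2^N

/-- `p_N = 1/2 − y_N`. -/
noncomputable def pGuu (N : ℕ) : ℝ := 1/2 - yGuu N

/-- `g_{n,i,a}^{-1}(S)`, where `g_{n,i,a}` inserts the letter `a` at position `i`. -/
def gPre (n : ℕ) (i : Fin (n+1)) (a : Bool) (S : Finset (Fin (n+1) → Bool)) :
    Finset (Fin n → Bool) :=
  Finset.univ.filter (fun x => i.insertNth a x ∈ S)



-- ########## auxiliary development ##########

/-- Hart's function: the minimum edge boundary of a `k`-subset of `Q_n`. -/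
def Bf (m s : ℕ) : ℕ := ∑ i ∈ Finset.range m, min (s % 2^(i+1)) (2^(i+1) - s % 2^(i+1))

lemma bf_zero (s : ℕ) : Bf 0 s = 0 := by simp [Bf]

lemma bf_one (s : ℕ) : Bf 1 s = min (s % 2) (2 - s % 2) := by simp [Bf]

lemma bf_even (n c : ℕ) : Bf (n+1) (2*c) = 2 * Bf n c := by
  rw [Bf, Finset.sum_range_succ']
  have h0 : min (2*c % 2^(0+1)) (2^(0+1) - 2*c % 2^(0+1)) = 0 := by
    simp [Nat.mul_mod_right]
  rw [h0, add_zero, Bf, Finset.mul_sum]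
  apply Finset.sum_congr rfl
  intro i _
  have hmod : 2*c % 2^(i+1+1) = 2 * (c % 2^(i+1)) := by
    rw [pow_succ, mul_comm (2^(i+1)) 2, Nat.mul_mod_mul_left]
  rw [hmod]
  have hlt : c % 2^(i+1) < 2^(i+1) := Nat.mod_lt _ (Nat.pow_pos (by norm_num))
  omega

lemma bf_odd (n c : ℕ) : Bf (n+1) (2*c+1) = 1 + Bf n c + Bf n (c+1) := by
  rw [Bf, Finset.sum_range_succ']
  have h0 : min ((2*c+1) % 2^(0+1)) (2^(0+1) - (2*c+1) % 2^(0+1)) = 1 := by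
    simp [Nat.add_mul_mod_self_left, Nat.mul_add_mod]
  rw [h0]
  have : ∀ i ∈ Finset.range n,
      min ((2*c+1) % 2^(i+1+1)) (2^(i+1+1) - (2*c+1) % 2^(i+1+1))
      = min (c % 2^(i+1)) (2^(i+1) - c % 2^(i+1))
        + min ((c+1) % 2^(i+1)) (2^(i+1) - (c+1) % 2^(i+1)) := by
    intro i _
    set d := 2^(i+1) with hd
    have hdpos : 0 < d := Nat.pow_pos (by norm_num)
    have hr : c % d < d := Nat.mod_lt _ hdpos
    have hmod : (2*c+1) % (2*d) = 2 * (c % d) + 1 := by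
      conv_lhs => rw [show 2*c+1 = 2*(d*(c/d) + c % d) + 1 by rw [Nat.div_add_mod]]
      rw [show 2*(d*(c/d) + c % d) + 1 = (2*(c%d)+1) + (c/d)*(2*d) by ring]
      rw [Nat.add_mul_mod_self_right, Nat.mod_eq_of_lt (by omega)]
    have hmod2 : (c+1) % d = if c % d = d - 1 then 0 else c % d + 1 := by
      conv_lhs => rw [show c+1 = (c % d + 1) + (c/d)*d by
        have h := Nat.div_add_mod c d; have h2 : (c/d)*d = d*(c/d) := Nat.mul_comm _ _; omega]
      rw [Nat.add_mul_mod_self_right]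
      split
      · next h => rw [show c % d + 1 = d by omega, Nat.mod_self]
      · next h => exact Nat.mod_eq_of_lt (by omega)
    have hpow : 2^(i+1+1) = 2*d := by rw [hd, pow_succ]; ring
    rw [hpow, hmod, hmod2]
    split <;> omega
  rw [Finset.sum_congr rfl this, Finset.sum_add_distrib]
  rw [Bf, Bf]
  ring

lemma bf_K (n : ℕ) : ∀ a b : ℕ, Bf (n+1) (a+b) ≤ Bf n a + Bf n b + Nat.dist a b := by
  induction n with
  | zero =>
    intro a b
    show Bf 1 (a+b) ≤ Bf 0 a + Bf 0 b + Nat.dist a b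
    rw [bf_zero, bf_zero, bf_one]
    simp only [Nat.dist]
    omega
  | succ n IH =>
    intro a b
    rcases Nat.even_or_odd a with ⟨a', rfl⟩ | ⟨a', rfl⟩ <;>
      rcases Nat.even_or_odd b with ⟨b', rfl⟩ | ⟨b', rfl⟩
    · -- even, even
      rw [show a'+a'+(b'+b') = 2*(a'+b') by ring, bf_even,
          show a'+a' = 2*a' by ring, bf_even, show b'+b' = 2*b' by ring, bf_even]
      have := IH a' b'
      simp only [Nat.dist] at *
      omega
    · -- even, odd
      rw [show a'+a'+(2*b'+1) = 2*(a'+b')+1 by ring, bf_odd,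
          show a'+a' = 2*a' by ring, bf_even, bf_odd]
      have h1 := IH a' b'
      have h2 := IH a' (b'+1)
      rw [show a'+(b'+1) = a'+b'+1 by ring] at h2
      simp only [Nat.dist] at *
      omega
    · -- odd, even
      rw [show 2*a'+1+(b'+b') = 2*(a'+b')+1 by ring, bf_odd,
          show b'+b' = 2*b' by ring, bf_even, bf_odd]
      have h1 := IH a' b'
      have h2 := IH (a'+1) b'
      rw [show a'+1+b' = a'+b'+1 by ring] at h2
      simp only [Nat.dist] at *
      omega
    · -- odd, odd
      rw [show 2*a'+1+(2*b'+1) = 2*(a'+b'+1) by ring, bf_even, bf_odd, bf_odd]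
      have h1 := IH a' (b'+1)
      have h2 := IH (a'+1) b'
      rw [show a'+(b'+1) = a'+b'+1 by ring] at h1
      rw [show a'+1+b' = a'+b'+1 by ring] at h2
      simp only [Nat.dist] at *
      omega

lemma bf_succ_low (m s : ℕ) (h : s ≤ 2^m) : Bf (m+1) s = s + Bf m s := by
  have hp : (2:ℕ)^(m+1) = 2*2^m := by rw [pow_succ]; ring
  have h0 : 0 < (2:ℕ)^m := Nat.pow_pos (by norm_num)
  rw [Bf, Finset.sum_range_succ, ← Bf]
  have hmod : s % 2^(m+1) = s := Nat.mod_eq_of_lt (by omega)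
  rw [hmod]
  omega

lemma bf_mod (m s : ℕ) (h : 2^m ≤ s) : Bf m s = Bf m (s - 2^m) := by
  rw [Bf, Bf]
  apply Finset.sum_congr rfl
  intro i hi
  have hi' : i + 1 ≤ m := Finset.mem_range.mp hi
  have hd : (2:ℕ)^m = 2^(m-(i+1)) * 2^(i+1) := by
    rw [← pow_add]; congr 1; omega
  have : s % 2^(i+1) = (s - 2^m) % 2^(i+1) := by
    conv_lhs => rw [show s = (s - 2^m) + 2^(m-(i+1)) * 2^(i+1) by omega]
    rw [Nat.add_mul_mod_self_right]
  rw [this]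

lemma bf_succ_high (m s : ℕ) (h1 : 2^m ≤ s) (h2 : s ≤ 2^(m+1)) :
    Bf (m+1) s = (2^(m+1) - s) + Bf m (s - 2^m) := by
  have hp : (2:ℕ)^(m+1) = 2*2^m := by rw [pow_succ]; ring
  have h0 : 0 < (2:ℕ)^m := Nat.pow_pos (by norm_num)
  rw [Bf, Finset.sum_range_succ, ← Bf, bf_mod m s h1]
  rcases eq_or_lt_of_le h2 with he | hlt
  · rw [he, Nat.mod_self]
    omega
  · rw [Nat.mod_eq_of_lt hlt]
    omega

lemma bf_sym (m s : ℕ) (h : s ≤ 2^m) : Bf m (2^m - s) = Bf m s := by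
  rw [Bf, Bf]
  apply Finset.sum_congr rfl
  intro i hi
  have hi' : i + 1 ≤ m := Finset.mem_range.mp hi
  set d := 2^(i+1) with hd
  have hdpos : 0 < d := Nat.pow_pos (by norm_num)
  set u := (2^m - s) % d with hu
  set r := s % d with hr
  have hult : u < d := Nat.mod_lt _ hdpos
  have hrlt : r < d := Nat.mod_lt _ hdpos
  have hdvd : d ∣ 2^m := pow_dvd_pow 2 hi'
  have hsum : (u + r) % d = 0 := by
    rw [hu, hr, ← Nat.add_mod, show 2^m - s + s = 2^m by omega]
    obtain ⟨e, he⟩ := hdvd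
    rw [he, Nat.mul_mod_right]
  have hdvd2 : d ∣ u + r := Nat.dvd_of_mod_eq_zero hsum
  obtain ⟨c, hc⟩ := hdvd2
  have hc2 : c < 2 := by
    by_contra hcc
    push_neg at hcc
    have : d * 2 ≤ d * c := Nat.mul_le_mul_left d hcc
    omega
  interval_cases c <;> omega

lemma bf_CB (m : ℕ) : (∀ s, 3*s ≤ 2^(m+1) → s ≤ Bf m s) ∧ (∀ s, 3*s ≤ 2^m → 2*s ≤ Bf m s) := by
  induction m with
  | zero =>
    constructor <;> intro s h <;> (have : s = 0 := by omega) <;> simp [this, bf_zero]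
  | succ m IH =>
    obtain ⟨IH1, IH2⟩ := IH
    have hp : (2:ℕ)^(m+1) = 2*2^m := by rw [pow_succ]; ring
    have hp2 : (2:ℕ)^(m+2) = 4*2^m := by rw [pow_succ, pow_succ]; ring
    have h0 : 0 < (2:ℕ)^m := Nat.pow_pos (by norm_num)
    constructor
    · intro s h
      by_cases hs : s ≤ 2^m
      · rw [bf_succ_low m s hs]; omega
      · push_neg at hs
        have hs2 : s ≤ 2^(m+1) := by omega
        rw [bf_succ_high m s hs.le hs2]
        have := IH2 (s - 2^m) (by omega)
        omega
    · intro s h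
      have hs : s ≤ 2^m := by omega
      rw [bf_succ_low m s hs]
      have := IH1 s (by omega)
      omega

lemma bf_C (m s : ℕ) (h : 3*s ≤ 2^(m+1)) : s ≤ Bf m s := (bf_CB m).1 s h
lemma bf_B2 (m s : ℕ) (h : 3*s ≤ 2^m) : 2*s ≤ Bf m s := (bf_CB m).2 s h

lemma bf_D (m s : ℕ) (h1 : 2*2^m ≤ 3*s) (h2 : s ≤ 2^m) : 2*(2^m - s) ≤ Bf m s := by
  rw [← bf_sym m s h2]
  exact bf_B2 m _ (by omega)

lemma bf_E (m s : ℕ) (h1 : 2^m ≤ 3*s) (h2 : s ≤ 2^m) : 2^m ≤ Bf m s + s := by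
  cases m with
  | zero =>
    interval_cases s <;> simp [bf_zero] <;> omega
  | succ m =>
    have hp : (2:ℕ)^(m+1) = 2*2^m := by rw [pow_succ]; ring
    have h0 : 0 < (2:ℕ)^m := Nat.pow_pos (by norm_num)
    by_cases hs : s ≤ 2^m
    · rw [bf_succ_low m s hs]
      rcases Nat.lt_or_ge (3*s) (2*2^m) with hc | hc
      · -- here 2^{m+1} ≤ 3 s fails? no: h1 : 2^{m+1} ≤ 3 s
        omega
      · have := bf_D m s hc hs
        omega
    · push_neg at hs
      rw [bf_succ_high m s hs.le h2]
      omega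

lemma bf_F (m s : ℕ) (h1 : 2^m ≤ 6*s) (h2 : 4*s ≤ 3*2^m) : 2^m ≤ 2*Bf m s := by
  cases m with
  | zero => omega
  | succ m =>
    have hp : (2:ℕ)^(m+1) = 2*2^m := by rw [pow_succ]; ring
    have h0 : 0 < (2:ℕ)^m := Nat.pow_pos (by norm_num)
    by_cases hs : s ≤ 2^m
    · rw [bf_succ_low m s hs]
      have := bf_E m s (by omega) hs
      omega
    · push_neg at hs
      have hs2 : s ≤ 2^(m+1) := by omega
      rw [bf_succ_high m s hs.le hs2]
      have := bf_C m (s - 2^m) (by omega)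
      omega

lemma bf_F' (m s : ℕ) (h1 : 2^m ≤ 6*s) (h2 : 6*s ≤ 5*2^m) : 2^m ≤ 2*Bf m s := by
  have h0 : 0 < (2:ℕ)^m := Nat.pow_pos (by norm_num)
  by_cases hc : 4*s ≤ 3*2^m
  · exact bf_F m s h1 hc
  · push_neg at hc
    have hs : s ≤ 2^m := by omega
    rw [← bf_sym m s hs]
    exact bf_F m _ (by omega) (by omega)

lemma bf_G' (m s : ℕ) (h1 : 2^m ≤ 12*s) (h2 : 12*s ≤ 5*2^m) : 4*s + 2^m ≤ 4*Bf m s := by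
  cases m with
  | zero => omega
  | succ m =>
    have hp : (2:ℕ)^(m+1) = 2*2^m := by rw [pow_succ]; ring
    have h0 : 0 < (2:ℕ)^m := Nat.pow_pos (by norm_num)
    have hs : s ≤ 2^m := by omega
    rw [bf_succ_low m s hs]
    have := bf_F' m s (by omega) (by omega)
    omega

lemma bf_G'sym (m s : ℕ) (h1 : 7*2^m ≤ 12*s) (h2 : 12*s ≤ 11*2^m) :
    5*2^m ≤ 4*Bf m s + 4*s := by
  have h0 : 0 < (2:ℕ)^m := Nat.pow_pos (by norm_num)
  have hs : s ≤ 2^m := by omega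
  rw [← bf_sym m s hs]
  have := bf_G' m (2^m - s) (by omega) (by omega)
  omega

lemma bf_B3 (m s : ℕ) (h : 8*s ≤ 2^m) : 3*s ≤ Bf m s := by
  cases m with
  | zero => omega
  | succ m =>
    have hp : (2:ℕ)^(m+1) = 2*2^m := by rw [pow_succ]; ring
    have h0 : 0 < (2:ℕ)^m := Nat.pow_pos (by norm_num)
    have hs : s ≤ 2^m := by omega
    rw [bf_succ_low m s hs]
    have := bf_B2 m s (by omega)
    omega

lemma bf_B3sym (m s : ℕ) (h1 : 7*2^m ≤ 8*s) (h2 : s ≤ 2^m) : 3*2^m ≤ Bf m s + 3*s := by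
  have h0 : 0 < (2:ℕ)^m := Nat.pow_pos (by norm_num)
  rw [← bf_sym m s h2]
  have := bf_B3 m (2^m - s) (by omega)
  omega

lemma bf_H1 (m s : ℕ) (h1 : 2^m ≤ 8*s) (h2 : 24*s ≤ 5*2^m) : 16*s + 2^m ≤ 8*Bf m s := by
  cases m with
  | zero => omega
  | succ m =>
    have hp : (2:ℕ)^(m+1) = 2*2^m := by rw [pow_succ]; ring
    have h0 : 0 < (2:ℕ)^m := Nat.pow_pos (by norm_num)
    have hs : s ≤ 2^m := by omega
    rw [bf_succ_low m s hs]
    have := bf_G' m s (by omega) (by omega)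
    omega

lemma bf_H2 (m s : ℕ) (h1 : 9*2^m ≤ 16*s) (h2 : 48*s ≤ 29*2^m) : 16*s + 2^m ≤ 16*Bf m s := by
  cases m with
  | zero => omega
  | succ m =>
    have hp : (2:ℕ)^(m+1) = 2*2^m := by rw [pow_succ]; ring
    have h0 : 0 < (2:ℕ)^m := Nat.pow_pos (by norm_num)
    have hs1 : 2^m ≤ s := by omega
    have hs2 : s ≤ 2^(m+1) := by omega
    rw [bf_succ_high m s hs1 hs2]
    have := bf_H1 m (s - 2^m) (by omega) (by omega)
    omega

lemma bf_H3 (m s : ℕ) (h1 : 9*2^m ≤ 32*s) (h2 : 96*s ≤ 29*2^m) : 64*s + 2^m ≤ 32*Bf m s := by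
  cases m with
  | zero => omega
  | succ m =>
    have hp : (2:ℕ)^(m+1) = 2*2^m := by rw [pow_succ]; ring
    have h0 : 0 < (2:ℕ)^m := Nat.pow_pos (by norm_num)
    have hs : s ≤ 2^m := by omega
    rw [bf_succ_low m s hs]
    have := bf_H2 m s (by omega) (by omega)
    omega

lemma bf_I1 (m s : ℕ) (h1 : 3*2^m ≤ 8*s) (h2 : 16*s ≤ 7*2^m) : 5*2^m ≤ 8*Bf m s := by
  cases m with
  | zero => omega
  | succ m =>
    have hp : (2:ℕ)^(m+1) = 2*2^m := by rw [pow_succ]; ring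
    have h0 : 0 < (2:ℕ)^m := Nat.pow_pos (by norm_num)
    have hs : s ≤ 2^m := by omega
    rw [bf_succ_low m s hs]
    have := bf_G'sym m s (by omega) (by omega)
    omega

lemma bf_I2 (m s : ℕ) (h1 : 7*2^m ≤ 16*s) (h2 : 2*s ≤ 2^m) : 3*2^m ≤ 2*Bf m s + 4*s := by
  cases m with
  | zero => omega
  | succ m =>
    have hp : (2:ℕ)^(m+1) = 2*2^m := by rw [pow_succ]; ring
    have h0 : 0 < (2:ℕ)^m := Nat.pow_pos (by norm_num)
    have hs : s ≤ 2^m := by omega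
    rw [bf_succ_low m s hs]
    have := bf_B3sym m s (by omega) hs
    omega

lemma bf_I3 (m s : ℕ) (h1 : 2^m ≤ 2*s) (h2 : 16*s ≤ 9*2^m) : 4*s ≤ 2*Bf m s + 2^m := by
  cases m with
  | zero => omega
  | succ m =>
    have hp : (2:ℕ)^(m+1) = 2*2^m := by rw [pow_succ]; ring
    have h0 : 0 < (2:ℕ)^m := Nat.pow_pos (by norm_num)
    have hs1 : 2^m ≤ s := by omega
    have hs2 : s ≤ 2^(m+1) := by omega
    rw [bf_succ_high m s hs1 hs2]
    have := bf_B3 m (s - 2^m) (by omega)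
    omega

lemma bf_I4 (m s : ℕ) (h1 : 9*2^m ≤ 16*s) (h2 : 8*s ≤ 5*2^m) : 5*2^m ≤ 8*Bf m s := by
  cases m with
  | zero => omega
  | succ m =>
    have hp : (2:ℕ)^(m+1) = 2*2^m := by rw [pow_succ]; ring
    have h0 : 0 < (2:ℕ)^m := Nat.pow_pos (by norm_num)
    have hs1 : 2^m ≤ s := by omega
    have hs2 : s ≤ 2^(m+1) := by omega
    rw [bf_succ_high m s hs1 hs2]
    have := bf_G' m (s - 2^m) (by omega) (by omega)
    omega

-- ##### combinatorial lemmas #####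

lemma mem_gPre {n : ℕ} {i : Fin (n+1)} {a : Bool} {S : Finset (Fin (n+1) → Bool)}
    {x : Fin n → Bool} : x ∈ gPre n i a S ↔ i.insertNth a x ∈ S := by
  simp [gPre]

lemma insertNth_injective {n : ℕ} (i : Fin (n+1)) (a : Bool) :
    Function.Injective (fun x : Fin n → Bool => (i.insertNth a x : Fin (n+1) → Bool)) := by
  intro x y h
  have := congrArg i.removeNth h
  simpa [Fin.removeNth_insertNth] using this

lemma card_ne_insertNth {n : ℕ} (i : Fin (n+1)) (a : Bool) (x y : Fin n → Bool) :
    (Finset.univ.filter fun j => (i.insertNth a x : Fin (n+1) → Bool) j ≠ (i.insertNth a y : Fin (n+1) → Bool) j).card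
      = (Finset.univ.filter fun j => x j ≠ y j).card := by
  have himg : (Finset.univ.filter fun j => (i.insertNth a x : Fin (n+1) → Bool) j ≠ (i.insertNth a y : Fin (n+1) → Bool) j)
      = (Finset.univ.filter fun j => x j ≠ y j).image i.succAbove := by
    ext j
    simp only [mem_filter, mem_univ, true_and, mem_image]
    constructor
    · intro hj
      have hji : j ≠ i := by
        intro h; subst h
        simp [Fin.insertNth_apply_same] at hj
      obtain ⟨j', hj'⟩ := Fin.exists_succAbove_eq hji
      refine ⟨j', ?_, hj'⟩
      rw [← hj'] at hj
      simpa [Fin.insertNth_apply_succAbove] using hj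
    · rintro ⟨j', hj', rfl⟩
      simpa [Fin.insertNth_apply_succAbove] using hj'
  rw [himg, Finset.card_image_of_injective _ (Fin.succAbove_right_injective)]

lemma cubeEdge_insertNth {n : ℕ} (i : Fin (n+1)) (a : Bool) (x y : Fin n → Bool) :
    cubeEdge (i.insertNth a x) (i.insertNth a y) ↔ cubeEdge x y := by
  unfold cubeEdge
  rw [card_ne_insertNth]

lemma cubeEdge_cross {n : ℕ} (i : Fin (n+1)) (x : Fin n → Bool) (a b : Bool) (hab : a ≠ b) :
    cubeEdge (i.insertNth a x : Fin (n+1) → Bool) (i.insertNth b x) := by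
  unfold cubeEdge
  have : (Finset.univ.filter fun j => (i.insertNth a x : Fin (n+1) → Bool) j ≠ (i.insertNth b x : Fin (n+1) → Bool) j) = {i} := by
    ext j
    simp only [mem_filter, mem_univ, true_and, mem_singleton]
    constructor
    · intro hj
      by_contra hji
      obtain ⟨j', hj'⟩ := Fin.exists_succAbove_eq hji
      rw [← hj'] at hj
      simp [Fin.insertNth_apply_succAbove] at hj
    · rintro rfl
      simpa [Fin.insertNth_apply_same] using hab
  rw [this, Finset.card_singleton]

lemma card_gPre {n : ℕ} (i : Fin (n+1)) (a : Bool) (S : Finset (Fin (n+1) → Bool)) :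
    (gPre n i a S).card = (S.filter fun z => z i = a).card := by
  apply Finset.card_bij (fun (x : Fin n → Bool) _ => (i.insertNth a x : Fin (n+1) → Bool))
  · intro x hx
    simp only [mem_filter]
    exact ⟨mem_gPre.mp hx, Fin.insertNth_apply_same (α := fun _ => Bool) i a x⟩
  · intro x hx y hy h
    exact insertNth_injective i a h
  · intro z hz
    simp only [mem_filter] at hz
    refine ⟨i.removeNth z, ?_, ?_⟩
    · rw [mem_gPre, ← hz.2, Fin.insertNth_self_removeNth]
      exact hz.1
    · rw [← hz.2, Fin.insertNth_self_removeNth]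

lemma card_gPre_add {n : ℕ} (i : Fin (n+1)) (S : Finset (Fin (n+1) → Bool)) :
    (gPre n i false S).card + (gPre n i true S).card = S.card := by
  rw [card_gPre, card_gPre]
  conv_rhs => rw [← Finset.card_filter_add_card_filter_not (p := fun z => z i = false)]
  congr 2
  apply Finset.filter_congr
  intro z _
  simp [Bool.not_eq_false]

lemma slice_bound {n : ℕ} (i : Fin (n+1)) (S : Finset (Fin (n+1) → Bool)) :
    edgeBoundary n (gPre n i false S) + edgeBoundary n (gPre n i true S)
      + Nat.dist (gPre n i false S).card (gPre n i true S).card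
    ≤ edgeBoundary (n+1) S := by
  classical
  set E := (Finset.univ.filter (fun p : (Fin (n+1) → Bool) × (Fin (n+1) → Bool) =>
    p.1 ∈ S ∧ p.2 ∉ S ∧ cubeEdge p.1 p.2)) with hE
  have hEB : edgeBoundary (n+1) S = E.card := rfl
  -- images of the within-slice boundary pairs
  let ψ : Bool → ((Fin n → Bool) × (Fin n → Bool)) → ((Fin (n+1) → Bool) × (Fin (n+1) → Bool)) :=
    fun a p => (i.insertNth a p.1, i.insertNth a p.2)
  let Ea : Bool → Finset ((Fin n → Bool) × (Fin n → Bool)) := fun a =>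
    (Finset.univ.filter (fun p : (Fin n → Bool) × (Fin n → Bool) =>
      p.1 ∈ gPre n i a S ∧ p.2 ∉ gPre n i a S ∧ cubeEdge p.1 p.2))
  let im : Bool → Finset ((Fin (n+1) → Bool) × (Fin (n+1) → Bool)) := fun a =>
    (Ea a).image (ψ a)
  let imX := ((gPre n i false S) \ (gPre n i true S)).image
    (fun x => ((i.insertNth false x : Fin (n+1) → Bool), (i.insertNth true x : Fin (n+1) → Bool)))
  let imY := ((gPre n i true S) \ (gPre n i false S)).image
    (fun x => ((i.insertNth true x : Fin (n+1) → Bool), (i.insertNth false x : Fin (n+1) → Bool)))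
  have hψinj : ∀ a : Bool, Function.Injective (ψ a) := by
    intro a p q h
    have h1 := congrArg Prod.fst h
    have h2 := congrArg Prod.snd h
    simp only [ψ] at h1 h2
    exact Prod.ext (insertNth_injective i a h1) (insertNth_injective i a h2)
  have hcard_im : ∀ a : Bool, (im a).card = edgeBoundary n (gPre n i a S) := by
    intro a
    rw [Finset.card_image_of_injective _ (hψinj a)]
    rfl
  have hcard_imX : imX.card = ((gPre n i false S) \ (gPre n i true S)).card := by
    apply Finset.card_image_of_injective
    intro x y h
    exact insertNth_injective i false (congrArg Prod.fst h)
  have hcard_imY : imY.card = ((gPre n i true S) \ (gPre n i false S)).card := by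
    apply Finset.card_image_of_injective
    intro x y h
    exact insertNth_injective i true (congrArg Prod.fst h)
  -- all four image sets are inside E
  have hsub_im : ∀ a : Bool, im a ⊆ E := by
    intro a p hp
    obtain ⟨q, hq, rfl⟩ := Finset.mem_image.mp hp
    simp only [Ea, Finset.mem_filter, Finset.mem_univ, true_and] at hq
    obtain ⟨h1, h2, h3⟩ := hq
    simp only [hE, Finset.mem_filter, Finset.mem_univ, true_and, ψ]
    refine ⟨mem_gPre.mp h1, fun hc => h2 (mem_gPre.mpr hc), ?_⟩
    exact (cubeEdge_insertNth i a q.1 q.2).mpr h3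
  have hsub_imX : imX ⊆ E := by
    intro p hp
    obtain ⟨x, hx, rfl⟩ := Finset.mem_image.mp hp
    rw [Finset.mem_sdiff] at hx
    simp only [hE, Finset.mem_filter, Finset.mem_univ, true_and]
    exact ⟨mem_gPre.mp hx.1, fun hc => hx.2 (mem_gPre.mpr hc),
      cubeEdge_cross i x false true (by simp)⟩
  have hsub_imY : imY ⊆ E := by
    intro p hp
    obtain ⟨x, hx, rfl⟩ := Finset.mem_image.mp hp
    rw [Finset.mem_sdiff] at hx
    simp only [hE, Finset.mem_filter, Finset.mem_univ, true_and]
    exact ⟨mem_gPre.mp hx.1, fun hc => hx.2 (mem_gPre.mpr hc),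
      cubeEdge_cross i x true false (by simp)⟩
  -- signatures at coordinate i
  have hsig_im : ∀ (a : Bool) p, p ∈ im a → p.1 i = a ∧ p.2 i = a := by
    intro a p hp
    obtain ⟨q, _, rfl⟩ := Finset.mem_image.mp hp
    constructor <;> exact Fin.insertNth_apply_same (α := fun _ => Bool) i a _
  have hsig_imX : ∀ p, p ∈ imX → p.1 i = false ∧ p.2 i = true := by
    intro p hp
    obtain ⟨x, _, rfl⟩ := Finset.mem_image.mp hp
    constructor <;> exact Fin.insertNth_apply_same (α := fun _ => Bool) i _ _
  have hsig_imY : ∀ p, p ∈ imY → p.1 i = true ∧ p.2 i = false := by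
    intro p hp
    obtain ⟨x, _, rfl⟩ := Finset.mem_image.mp hp
    constructor <;> exact Fin.insertNth_apply_same (α := fun _ => Bool) i _ _
  -- disjointness
  have hd1 : Disjoint (im false) (im true) := by
    rw [Finset.disjoint_left]
    intro p h1 h2
    have := (hsig_im false p h1).1
    have := (hsig_im true p h2).1
    simp_all
  have hd2 : Disjoint (im false ∪ im true) imX := by
    rw [Finset.disjoint_left]
    intro p h1 h2
    have hx := (hsig_imX p h2).2
    rcases Finset.mem_union.mp h1 with h | h
    · have := (hsig_im false p h).2; simp_all
    · have := (hsig_im true p h).1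
      have := (hsig_imX p h2).1; simp_all
  have hd3 : Disjoint (im false ∪ im true ∪ imX) imY := by
    rw [Finset.disjoint_left]
    intro p h1 h2
    have hy1 := (hsig_imY p h2).1
    have hy2 := (hsig_imY p h2).2
    rcases Finset.mem_union.mp h1 with h | h
    · rcases Finset.mem_union.mp h with h' | h'
      · have := (hsig_im false p h').1; simp_all
      · have := (hsig_im true p h').2; simp_all
    · have := (hsig_imX p h).1; simp_all
  have hunion : im false ∪ im true ∪ imX ∪ imY ⊆ E := by
    intro p hp
    rcases Finset.mem_union.mp hp with h | h
    · rcases Finset.mem_union.mp h with h' | h'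
      · rcases Finset.mem_union.mp h' with h'' | h''
        · exact hsub_im false h''
        · exact hsub_im true h''
      · exact hsub_imX h'
    · exact hsub_imY h
  have hcard : (im false).card + (im true).card + imX.card + imY.card ≤ E.card := by
    have h1 := Finset.card_le_card hunion
    rw [Finset.card_union_of_disjoint hd3, Finset.card_union_of_disjoint hd2,
        Finset.card_union_of_disjoint hd1] at h1
    omega
  have hdist : Nat.dist (gPre n i false S).card (gPre n i true S).card
      ≤ ((gPre n i false S) \ (gPre n i true S)).card
        + ((gPre n i true S) \ (gPre n i false S)).card := by
    have h1 := Finset.le_card_sdiff (gPre n i true S) (gPre n i false S)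
    have h2 := Finset.le_card_sdiff (gPre n i false S) (gPre n i true S)
    simp only [Nat.dist]
    omega
  rw [hEB]
  have e1 := hcard_im false
  have e2 := hcard_im true
  omega

theorem hart_bound : ∀ (n : ℕ) (S : Finset (Fin n → Bool)), Bf n S.card ≤ edgeBoundary n S := by
  intro n
  induction n with
  | zero => intro S; simp [bf_zero]
  | succ n IH =>
    intro S
    have hslice := slice_bound (0 : Fin (n+1)) S
    have h1 := IH (gPre n 0 false S)
    have h2 := IH (gPre n 0 true S)
    have hK := bf_K n (gPre n 0 false S).card (gPre n 0 true S).card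
    have hadd := card_gPre_add (0 : Fin (n+1)) S
    rw [hadd] at hK
    omega

-- auto-generated leaf lemmas
lemma leafU1V1 (t k P B1 B2 s : ℝ) (hP : (0:ℝ) < P) (hs : s = k - t)
    (hg1 : (0:ℝ) ≤ 12*t - P)
    (hg2 : (0:ℝ) ≤ 29*P - 96*t)
    (hg3 : (0:ℝ) ≤ P - k)
    (hg4 : (0:ℝ) ≤ k - 2*t)
    (hu1 : (0:ℝ) ≤ 4*B1 - 4*t - P)
    (hu2 : (0:ℝ) ≤ P - 4*t)
    (hv1 : (0:ℝ) ≤ 4*B2 - 4*s - P)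
    (hv2 : (0:ℝ) ≤ 3*P - 8*s) :
    21*P^2 ≤ 14*P*((k - 2*t) + B1 + B2) + 64*(k-P)^2 := by
  subst hs
  nlinarith [sq_nonneg (k - (65/96)*P),
    mul_nonneg hg1 hP.le,
    mul_nonneg hg3 hP.le,
    mul_nonneg hu1 hP.le,
    mul_nonneg hu2 hP.le,
    mul_nonneg hv1 hP.le]

lemma leafU1V2 (t k P B1 B2 s : ℝ) (hP : (0:ℝ) < P) (hs : s = k - t)
    (hg1 : (0:ℝ) ≤ 12*t - P)
    (hg2 : (0:ℝ) ≤ 29*P - 96*t)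
    (hg3 : (0:ℝ) ≤ P - k)
    (hg4 : (0:ℝ) ≤ k - 2*t)
    (hu1 : (0:ℝ) ≤ 4*B1 - 4*t - P)
    (hu2 : (0:ℝ) ≤ P - 4*t)
    (hv1 : (0:ℝ) ≤ 8*B2 - 5*P)
    (hv2 : (0:ℝ) ≤ 8*s - 3*P)
    (hv3 : (0:ℝ) ≤ 7*P - 16*s) :
    21*P^2 ≤ 14*P*((k - 2*t) + B1 + B2) + 64*(k-P)^2 := by
  subst hs
  nlinarith [sq_nonneg (k - (11/24)*P),
    mul_nonneg hg1 hP.le,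
    mul_nonneg hu1 hP.le,
    mul_nonneg hu2 hP.le,
    mul_nonneg hv1 hP.le,
    mul_nonneg hv3 hP.le]

lemma leafU1V3 (t k P B1 B2 s : ℝ) (hP : (0:ℝ) < P) (hs : s = k - t)
    (hg1 : (0:ℝ) ≤ 12*t - P)
    (hg2 : (0:ℝ) ≤ 29*P - 96*t)
    (hg3 : (0:ℝ) ≤ P - k)
    (hg4 : (0:ℝ) ≤ k - 2*t)
    (hu1 : (0:ℝ) ≤ 4*B1 - 4*t - P)
    (hu2 : (0:ℝ) ≤ P - 4*t)
    (hv1 : (0:ℝ) ≤ 2*B2 + 4*s - 3*P)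
    (hv2 : (0:ℝ) ≤ 16*s - 7*P)
    (hv3 : (0:ℝ) ≤ P - 2*s) :
    21*P^2 ≤ 14*P*((k - 2*t) + B1 + B2) + 64*(k-P)^2 := by
  subst hs
  nlinarith [sq_nonneg (k - (2/3)*P),
    mul_nonneg hg1 hP.le,
    mul_nonneg hu1 hP.le,
    mul_nonneg hu2 hP.le,
    mul_nonneg hv1 hP.le,
    mul_nonneg hv3 hP.le]

lemma leafU1V4 (t k P B1 B2 s : ℝ) (hP : (0:ℝ) < P) (hs : s = k - t)
    (hg1 : (0:ℝ) ≤ 12*t - P)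
    (hg2 : (0:ℝ) ≤ 29*P - 96*t)
    (hg3 : (0:ℝ) ≤ P - k)
    (hg4 : (0:ℝ) ≤ k - 2*t)
    (hu1 : (0:ℝ) ≤ 4*B1 - 4*t - P)
    (hu2 : (0:ℝ) ≤ P - 4*t)
    (hv1 : (0:ℝ) ≤ 2*B2 + P - 4*s)
    (hv2 : (0:ℝ) ≤ 2*s - P)
    (hv3 : (0:ℝ) ≤ 9*P - 16*s) :
    21*P^2 ≤ 14*P*((k - 2*t) + B1 + B2) + 64*(k-P)^2 := by
  subst hs
  nlinarith [sq_nonneg (k - (2/3)*P),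
    mul_nonneg hg1 hP.le,
    mul_nonneg hu1 hP.le,
    mul_nonneg hu2 hP.le,
    mul_nonneg hv1 hP.le,
    mul_nonneg hv3 hP.le]

lemma leafU1V5 (t k P B1 B2 s : ℝ) (hP : (0:ℝ) < P) (hs : s = k - t)
    (hg1 : (0:ℝ) ≤ 12*t - P)
    (hg2 : (0:ℝ) ≤ 29*P - 96*t)
    (hg3 : (0:ℝ) ≤ P - k)
    (hg4 : (0:ℝ) ≤ k - 2*t)
    (hu1 : (0:ℝ) ≤ 4*B1 - 4*t - P)
    (hu2 : (0:ℝ) ≤ P - 4*t)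
    (hv1 : (0:ℝ) ≤ 8*B2 - 5*P)
    (hv2 : (0:ℝ) ≤ 16*s - 9*P)
    (hv3 : (0:ℝ) ≤ 7*P - 12*s) :
    21*P^2 ≤ 14*P*((k - 2*t) + B1 + B2) + 64*(k-P)^2 := by
  subst hs
  nlinarith [sq_nonneg (k - (67/96)*P),
    mul_nonneg hg1 hP.le,
    mul_nonneg hu1 hP.le,
    mul_nonneg hu2 hP.le,
    mul_nonneg hv1 hP.le,
    mul_nonneg hv3 hP.le]

lemma leafU2V1 (t k P B1 B2 s : ℝ) (hP : (0:ℝ) < P) (hs : s = k - t)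
    (hg1 : (0:ℝ) ≤ 12*t - P)
    (hg2 : (0:ℝ) ≤ 29*P - 96*t)
    (hg3 : (0:ℝ) ≤ P - k)
    (hg4 : (0:ℝ) ≤ k - 2*t)
    (hu1 : (0:ℝ) ≤ B1 - 2*t)
    (hu2 : (0:ℝ) ≤ 4*t - P)
    (hu3 : (0:ℝ) ≤ 9*P - 32*t)
    (hv1 : (0:ℝ) ≤ 4*B2 - 4*s - P)
    (hv2 : (0:ℝ) ≤ 3*P - 8*s) :
    21*P^2 ≤ 14*P*((k - 2*t) + B1 + B2) + 64*(k-P)^2 := by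
  subst hs
  nlinarith [sq_nonneg (k - (11/16)*P),
    mul_nonneg hg1 hP.le,
    mul_nonneg hg2 hP.le,
    mul_nonneg hg3 hP.le,
    mul_nonneg hu1 hP.le,
    mul_nonneg hv1 hP.le]

lemma leafU2V2 (t k P B1 B2 s : ℝ) (hP : (0:ℝ) < P) (hs : s = k - t)
    (hg1 : (0:ℝ) ≤ 12*t - P)
    (hg2 : (0:ℝ) ≤ 29*P - 96*t)
    (hg3 : (0:ℝ) ≤ P - k)
    (hg4 : (0:ℝ) ≤ k - 2*t)
    (hu1 : (0:ℝ) ≤ B1 - 2*t)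
    (hu2 : (0:ℝ) ≤ 4*t - P)
    (hu3 : (0:ℝ) ≤ 9*P - 32*t)
    (hv1 : (0:ℝ) ≤ 8*B2 - 5*P)
    (hv2 : (0:ℝ) ≤ 8*s - 3*P)
    (hv3 : (0:ℝ) ≤ 7*P - 16*s) :
    21*P^2 ≤ 14*P*((k - 2*t) + B1 + B2) + 64*(k-P)^2 := by
  subst hs
  nlinarith [sq_nonneg (k - (49/96)*P),
    mul_nonneg hg1 hP.le,
    mul_nonneg hu1 hP.le,
    mul_nonneg hu3 hP.le,
    mul_nonneg hv1 hP.le,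
    mul_nonneg hv3 hP.le]

lemma leafU2V3 (t k P B1 B2 s : ℝ) (hP : (0:ℝ) < P) (hs : s = k - t)
    (hg1 : (0:ℝ) ≤ 12*t - P)
    (hg2 : (0:ℝ) ≤ 29*P - 96*t)
    (hg3 : (0:ℝ) ≤ P - k)
    (hg4 : (0:ℝ) ≤ k - 2*t)
    (hu1 : (0:ℝ) ≤ B1 - 2*t)
    (hu2 : (0:ℝ) ≤ 4*t - P)
    (hu3 : (0:ℝ) ≤ 9*P - 32*t)
    (hv1 : (0:ℝ) ≤ 2*B2 + 4*s - 3*P)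
    (hv2 : (0:ℝ) ≤ 16*s - 7*P)
    (hv3 : (0:ℝ) ≤ P - 2*s) :
    21*P^2 ≤ 14*P*((k - 2*t) + B1 + B2) + 64*(k-P)^2 := by
  subst hs
  nlinarith [sq_nonneg (k - (25/32)*P),
    mul_nonneg hu1 hP.le,
    mul_nonneg hu3 hP.le,
    mul_nonneg hv1 hP.le,
    mul_nonneg hv3 hP.le]

lemma leafU2V4 (t k P B1 B2 s : ℝ) (hP : (0:ℝ) < P) (hs : s = k - t)
    (hg1 : (0:ℝ) ≤ 12*t - P)
    (hg2 : (0:ℝ) ≤ 29*P - 96*t)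
    (hg3 : (0:ℝ) ≤ P - k)
    (hg4 : (0:ℝ) ≤ k - 2*t)
    (hu1 : (0:ℝ) ≤ B1 - 2*t)
    (hu2 : (0:ℝ) ≤ 4*t - P)
    (hu3 : (0:ℝ) ≤ 9*P - 32*t)
    (hv1 : (0:ℝ) ≤ 2*B2 + P - 4*s)
    (hv2 : (0:ℝ) ≤ 2*s - P)
    (hv3 : (0:ℝ) ≤ 9*P - 16*s) :
    21*P^2 ≤ 14*P*((k - 2*t) + B1 + B2) + 64*(k-P)^2 := by
  subst hs
  nlinarith [sq_nonneg (k - (25/32)*P),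
    mul_nonneg hu1 hP.le,
    mul_nonneg hu3 hP.le,
    mul_nonneg hv1 hP.le,
    mul_nonneg hv2 hP.le]

lemma leafU2V5 (t k P B1 B2 s : ℝ) (hP : (0:ℝ) < P) (hs : s = k - t)
    (hg1 : (0:ℝ) ≤ 12*t - P)
    (hg2 : (0:ℝ) ≤ 29*P - 96*t)
    (hg3 : (0:ℝ) ≤ P - k)
    (hg4 : (0:ℝ) ≤ k - 2*t)
    (hu1 : (0:ℝ) ≤ B1 - 2*t)
    (hu2 : (0:ℝ) ≤ 4*t - P)
    (hu3 : (0:ℝ) ≤ 9*P - 32*t)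
    (hv1 : (0:ℝ) ≤ 8*B2 - 5*P)
    (hv2 : (0:ℝ) ≤ 16*s - 9*P)
    (hv3 : (0:ℝ) ≤ 7*P - 12*s) :
    21*P^2 ≤ 14*P*((k - 2*t) + B1 + B2) + 64*(k-P)^2 := by
  subst hs
  nlinarith [sq_nonneg (k - (71/96)*P),
    mul_nonneg hg1 hP.le,
    mul_nonneg hu1 hP.le,
    mul_nonneg hu3 hP.le,
    mul_nonneg hv1 hP.le,
    mul_nonneg hv3 hP.le]

lemma leafU3V1 (t k P B1 B2 s : ℝ) (hP : (0:ℝ) < P) (hs : s = k - t)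
    (hg1 : (0:ℝ) ≤ 12*t - P)
    (hg2 : (0:ℝ) ≤ 29*P - 96*t)
    (hg3 : (0:ℝ) ≤ P - k)
    (hg4 : (0:ℝ) ≤ k - 2*t)
    (hu1 : (0:ℝ) ≤ 32*B1 - 64*t - P)
    (hu2 : (0:ℝ) ≤ 32*t - 9*P)
    (hv1 : (0:ℝ) ≤ 4*B2 - 4*s - P)
    (hv2 : (0:ℝ) ≤ 3*P - 8*s) :
    21*P^2 ≤ 14*P*((k - 2*t) + B1 + B2) + 64*(k-P)^2 := by
  subst hs
  nlinarith [sq_nonneg (k - (65/96)*P),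
    mul_nonneg hg1 hP.le,
    mul_nonneg hg2 hP.le,
    mul_nonneg hg3 hP.le,
    mul_nonneg hu1 hP.le,
    mul_nonneg hv1 hP.le]

lemma leafU3V2 (t k P B1 B2 s : ℝ) (hP : (0:ℝ) < P) (hs : s = k - t)
    (hg1 : (0:ℝ) ≤ 12*t - P)
    (hg2 : (0:ℝ) ≤ 29*P - 96*t)
    (hg3 : (0:ℝ) ≤ P - k)
    (hg4 : (0:ℝ) ≤ k - 2*t)
    (hu1 : (0:ℝ) ≤ 32*B1 - 64*t - P)
    (hu2 : (0:ℝ) ≤ 32*t - 9*P)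
    (hv1 : (0:ℝ) ≤ 8*B2 - 5*P)
    (hv2 : (0:ℝ) ≤ 8*s - 3*P)
    (hv3 : (0:ℝ) ≤ 7*P - 16*s) :
    21*P^2 ≤ 14*P*((k - 2*t) + B1 + B2) + 64*(k-P)^2 := by
  subst hs
  nlinarith [sq_nonneg (k - (17/32)*P),
    mul_nonneg hg1 hP.le,
    mul_nonneg hg2 hP.le,
    mul_nonneg hu1 hP.le,
    mul_nonneg hv1 hP.le,
    mul_nonneg hv3 hP.le]

lemma leafU3V3 (t k P B1 B2 s : ℝ) (hP : (0:ℝ) < P) (hs : s = k - t)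
    (hg1 : (0:ℝ) ≤ 12*t - P)
    (hg2 : (0:ℝ) ≤ 29*P - 96*t)
    (hg3 : (0:ℝ) ≤ P - k)
    (hg4 : (0:ℝ) ≤ k - 2*t)
    (hu1 : (0:ℝ) ≤ 32*B1 - 64*t - P)
    (hu2 : (0:ℝ) ≤ 32*t - 9*P)
    (hv1 : (0:ℝ) ≤ 2*B2 + 4*s - 3*P)
    (hv2 : (0:ℝ) ≤ 16*s - 7*P)
    (hv3 : (0:ℝ) ≤ P - 2*s) :
    21*P^2 ≤ 14*P*((k - 2*t) + B1 + B2) + 64*(k-P)^2 := by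
  subst hs
  nlinarith [sq_nonneg (k - (3/4)*P),
    mul_nonneg hg2 hP.le,
    mul_nonneg hu1 hP.le,
    mul_nonneg hv1 hP.le,
    mul_nonneg hv3 hP.le]

lemma leafU3V4 (t k P B1 B2 s : ℝ) (hP : (0:ℝ) < P) (hs : s = k - t)
    (hg1 : (0:ℝ) ≤ 12*t - P)
    (hg2 : (0:ℝ) ≤ 29*P - 96*t)
    (hg3 : (0:ℝ) ≤ P - k)
    (hg4 : (0:ℝ) ≤ k - 2*t)
    (hu1 : (0:ℝ) ≤ 32*B1 - 64*t - P)
    (hu2 : (0:ℝ) ≤ 32*t - 9*P)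
    (hv1 : (0:ℝ) ≤ 2*B2 + P - 4*s)
    (hv2 : (0:ℝ) ≤ 2*s - P)
    (hv3 : (0:ℝ) ≤ 9*P - 16*s) :
    21*P^2 ≤ 14*P*((k - 2*t) + B1 + B2) + 64*(k-P)^2 := by
  subst hs
  nlinarith [sq_nonneg (k - (3/4)*P),
    mul_nonneg hg1 hP.le,
    mul_nonneg hg2 hP.le,
    mul_nonneg hu1 hP.le,
    mul_nonneg hv1 hP.le,
    mul_nonneg hv2 hP.le]

lemma leafU3V5 (t k P B1 B2 s : ℝ) (hP : (0:ℝ) < P) (hs : s = k - t)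
    (hg1 : (0:ℝ) ≤ 12*t - P)
    (hg2 : (0:ℝ) ≤ 29*P - 96*t)
    (hg3 : (0:ℝ) ≤ P - k)
    (hg4 : (0:ℝ) ≤ k - 2*t)
    (hu1 : (0:ℝ) ≤ 32*B1 - 64*t - P)
    (hu2 : (0:ℝ) ≤ 32*t - 9*P)
    (hv1 : (0:ℝ) ≤ 8*B2 - 5*P)
    (hv2 : (0:ℝ) ≤ 16*s - 9*P)
    (hv3 : (0:ℝ) ≤ 7*P - 12*s) :
    21*P^2 ≤ 14*P*((k - 2*t) + B1 + B2) + 64*(k-P)^2 := by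
  subst hs
  nlinarith [sq_nonneg (k - (71/96)*P),
    mul_nonneg hg1 hP.le,
    mul_nonneg hg2 hP.le,
    mul_nonneg hu1 hP.le,
    mul_nonneg hv1 hP.le,
    mul_nonneg hv3 hP.le]


lemma leafV6 (t k P B1 B2 s : ℝ) (hP : (0:ℝ) < P) (hs : s = k - t)
    (hu : (0:ℝ) ≤ 4*B1 - 4*t - P) (hv : (0:ℝ) ≤ 4*B2 + 4*s - 5*P) :
    21*P^2 ≤ 14*P*((k - 2*t) + B1 + B2) + 64*(k-P)^2 := by
  subst hs
  nlinarith [sq_nonneg (k - P), mul_nonneg hu hP.le, mul_nonneg hv hP.le]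

set_option maxHeartbeats 1000000 in
/-- Guu, Claim 15. -/
theorem theta_lower_bound_middle_type (n k t : ℕ) (hn : 3 ≤ n)
    (S : Finset (Fin n → Bool)) (hcard : S.card = k) (htype : typeOf n S = t)
    (ht0 : 0 < 2*t) (h2t : 2*t ≤ k) (hk : k ≤ 2^(n-1))
    (hlow : (1:ℝ)/24 ≤ (t:ℝ)/2^n) (hhigh : (t:ℝ)/2^n ≤ 1/24 + 7/64) :
    (edgeBoundary n S : ℝ) ≥ 2^n * fGuu ((k:ℝ)/2^n) := by
  obtain ⟨m, rfl⟩ : ∃ m, n = m + 1 := ⟨n-1, by omega⟩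
  -- an achieving half plane
  have hne : {c | ∃ (i : Fin (m+1)) (a : Bool), (S ∩ halfPlane (m+1) i a).card = c}.Nonempty :=
    ⟨_, ⟨⟨0, by omega⟩, false, rfl⟩⟩
  have hmem := Nat.sInf_mem hne
  have htype' : sInf {c | ∃ (i : Fin (m+1)) (a : Bool), (S ∩ halfPlane (m+1) i a).card = c} = t :=
    htype
  rw [htype'] at hmem
  obtain ⟨i, a, hia⟩ := hmem
  have hhp : ∀ (b : Bool), (S ∩ halfPlane (m+1) i b).card = (S.filter fun z => z i = b).card := by
    intro b; congr 1; ext z; simp [halfPlane, Finset.mem_inter, Finset.mem_filter]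
  have hgf : (gPre m i false S).card = (S ∩ halfPlane (m+1) i false).card := by
    rw [card_gPre, hhp]
  have hgt : (gPre m i true S).card = (S ∩ halfPlane (m+1) i true).card := by
    rw [card_gPre, hhp]
  have hcards : (gPre m i false S).card + (gPre m i true S).card = k := by
    rw [card_gPre_add, hcard]
  -- main combinatorial lower bound
  have hmain : (k - 2*t) + Bf m t + Bf m (k - t) ≤ edgeBoundary (m+1) S := by
    have hslice := slice_bound i S
    have h1 := hart_bound m (gPre m i false S)
    have h2 := hart_bound m (gPre m i true S)
    have hB : Bf m (gPre m i false S).card + Bf m (gPre m i true S).card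
        + Nat.dist (gPre m i false S).card (gPre m i true S).card
        = Bf m t + Bf m (k - t) + (k - 2*t) := by
      cases a with
      | false =>
        have e1 : (gPre m i false S).card = t := by rw [hgf, hia]
        have e2 : (gPre m i true S).card = k - t := by omega
        rw [e1, e2]
        simp only [Nat.dist]
        omega
      | true =>
        have e1 : (gPre m i true S).card = t := by rw [hgt, hia]
        have e2 : (gPre m i false S).card = k - t := by omega
        rw [e1, e2]
        simp only [Nat.dist]
        omega
    omega
  -- integer forms of the range hypotheses
  have hpowR : ((2:ℝ))^(m+1) = ((2^(m+1) : ℕ) : ℝ) := by push_cast; ring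
  have hlow' : 2^(m+1) ≤ 24 * t := by
    rw [div_le_div_iff₀ (by norm_num) (by positivity)] at hlow
    have : ((2^(m+1) : ℕ) : ℝ) ≤ ((24 * t : ℕ) : ℝ) := by push_cast; push_cast at hlow; linarith
    exact_mod_cast this
  have hhigh' : 192 * t ≤ 58 * 2^m := by
    rw [div_le_iff₀ (by positivity)] at hhigh
    have h2m : (2:ℝ)^(m+1) = 2*(2:ℝ)^m := by rw [pow_succ]; ring
    rw [h2m] at hhigh
    have : ((192 * t : ℕ) : ℝ) ≤ ((58 * 2^m : ℕ) : ℝ) := by push_cast; linarith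
    exact_mod_cast this
  have hk' : k ≤ 2^m := hk
  have hp : (2:ℕ)^(m+1) = 2*2^m := by rw [pow_succ]; ring
  have h0 : 0 < (2:ℕ)^m := Nat.pow_pos (by norm_num)
  set s : ℕ := k - t with hs
  set P : ℕ := 2^m with hP
  have hPt : P ≤ 12*t := by omega
  have hth : 96*t ≤ 29*P := by omega
  set B1 : ℕ := Bf m t with hB1
  set B2 : ℕ := Bf m s with hB2
  -- pass to the reals
  have hPr : (0:ℝ) < (P:ℝ) := by positivity
  have key2 : 21*(P:ℝ)^2 ≤ 14*(P:ℝ)*(((k:ℝ) - 2*(t:ℝ)) + (B1:ℝ) + (B2:ℝ))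
      + 64*((k:ℝ) - (P:ℝ))^2 := by
    set t' : ℝ := (t:ℝ)
    have hPtR : (P:ℝ) ≤ 12*(t:ℝ) := by exact_mod_cast hPt
    have hthR : 96*(t:ℝ) ≤ 29*(P:ℝ) := by exact_mod_cast hth
    have h2tR : 2*(t:ℝ) ≤ (k:ℝ) := by exact_mod_cast h2t
    have hkR : (k:ℝ) ≤ (P:ℝ) := by exact_mod_cast hk'
    have hsR : (s:ℝ) = (k:ℝ) - (t:ℝ) := by
      rw [hs]; push_cast [Nat.cast_sub (by omega : t ≤ k)]; ring
    by_cases hV6 : 7*P ≤ 12*s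
    · have hb2R : 5*(P:ℝ) ≤ 4*(B2:ℝ) + 4*(s:ℝ) := by
        exact_mod_cast bf_G'sym m s hV6 (by omega)
      have hb1R : 4*(t:ℝ) + (P:ℝ) ≤ 4*(B1:ℝ) := by
        exact_mod_cast bf_G' m t hPt (by omega)
      exact leafV6 t k P B1 B2 s hPr hsR (by linarith) (by linarith)
    · push_neg at hV6
      have hub1 : (4*(B1:ℝ) ≥ 4*(t:ℝ) + (P:ℝ) ∧ 4*(t:ℝ) ≤ (P:ℝ)) ∨
          ((B1:ℝ) ≥ 2*(t:ℝ) ∧ 4*(t:ℝ) ≥ (P:ℝ) ∧ 32*(t:ℝ) ≤ 9*(P:ℝ)) ∨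
          (32*(B1:ℝ) ≥ 64*(t:ℝ) + (P:ℝ) ∧ 32*(t:ℝ) ≥ 9*(P:ℝ)) := by
        by_cases hu1 : 4*t ≤ P
        · refine Or.inl ⟨?_, by exact_mod_cast hu1⟩
          exact_mod_cast bf_G' m t hPt (by omega)
        · by_cases hu2 : 32*t ≤ 9*P
          · refine Or.inr (Or.inl ⟨?_, ?_, ?_⟩)
            · exact_mod_cast bf_B2 m t (by omega)
            · push_neg at hu1; exact_mod_cast hu1.le
            · exact_mod_cast hu2
          · refine Or.inr (Or.inr ⟨?_, by push_neg at hu2; exact_mod_cast hu2.le⟩)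
            exact_mod_cast bf_H3 m t (by omega) (by omega)
      rcases le_or_gt (8*s) (3*P) with hv1 | hv1
      · have hb2R : 4*(s:ℝ) + (P:ℝ) ≤ 4*(B2:ℝ) := by
          exact_mod_cast bf_G' m s (by omega) (by omega)
        have hv1R : 8*(s:ℝ) ≤ 3*(P:ℝ) := by exact_mod_cast hv1
        rcases hub1 with ⟨hb1R, hu1R⟩ | ⟨hb1R, hu2aR, hu2bR⟩ | ⟨hb1R, hu3R⟩
        · exact leafU1V1 t k P B1 B2 s hPr hsR (by linarith) (by linarith) (by linarith) (by linarith) (by linarith) (by linarith) (by linarith) (by linarith)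
        · exact leafU2V1 t k P B1 B2 s hPr hsR (by linarith) (by linarith) (by linarith) (by linarith) (by linarith) (by linarith) (by linarith) (by linarith) (by linarith)
        · exact leafU3V1 t k P B1 B2 s hPr hsR (by linarith) (by linarith) (by linarith) (by linarith) (by linarith) (by linarith) (by linarith) (by linarith)
      · rcases le_or_gt (16*s) (7*P) with hv2 | hv2
        · have hb2R : 5*(P:ℝ) ≤ 8*(B2:ℝ) := by
            exact_mod_cast bf_I1 m s (by omega) (by omega)
          have hvaR : 3*(P:ℝ) ≤ 8*(s:ℝ) := by exact_mod_cast hv1.le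
          have hvbR : 16*(s:ℝ) ≤ 7*(P:ℝ) := by exact_mod_cast hv2
          rcases hub1 with ⟨hb1R, hu1R⟩ | ⟨hb1R, hu2aR, hu2bR⟩ | ⟨hb1R, hu3R⟩
          · exact leafU1V2 t k P B1 B2 s hPr hsR (by linarith) (by linarith) (by linarith) (by linarith) (by linarith) (by linarith) (by linarith) (by linarith) (by linarith)
          · exact leafU2V2 t k P B1 B2 s hPr hsR (by linarith) (by linarith) (by linarith) (by linarith) (by linarith) (by linarith) (by linarith) (by linarith) (by linarith) (by linarith)
          · exact leafU3V2 t k P B1 B2 s hPr hsR (by linarith) (by linarith) (by linarith) (by linarith) (by linarith) (by linarith) (by linarith) (by linarith) (by linarith)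
        · rcases le_or_gt (2*s) P with hv3 | hv3
          · have hb2R : 3*(P:ℝ) ≤ 2*(B2:ℝ) + 4*(s:ℝ) := by
              exact_mod_cast bf_I2 m s (by omega) (by omega)
            have hvaR : 7*(P:ℝ) ≤ 16*(s:ℝ) := by exact_mod_cast hv2.le
            have hvbR : 2*(s:ℝ) ≤ (P:ℝ) := by exact_mod_cast hv3
            rcases hub1 with ⟨hb1R, hu1R⟩ | ⟨hb1R, hu2aR, hu2bR⟩ | ⟨hb1R, hu3R⟩
            · exact leafU1V3 t k P B1 B2 s hPr hsR (by linarith) (by linarith) (by linarith) (by linarith) (by linarith) (by linarith) (by linarith) (by linarith) (by linarith)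
            · exact leafU2V3 t k P B1 B2 s hPr hsR (by linarith) (by linarith) (by linarith) (by linarith) (by linarith) (by linarith) (by linarith) (by linarith) (by linarith) (by linarith)
            · exact leafU3V3 t k P B1 B2 s hPr hsR (by linarith) (by linarith) (by linarith) (by linarith) (by linarith) (by linarith) (by linarith) (by linarith) (by linarith)
          · rcases le_or_gt (16*s) (9*P) with hv4 | hv4
            · have hb2R : 4*(s:ℝ) ≤ 2*(B2:ℝ) + (P:ℝ) := by
                exact_mod_cast bf_I3 m s (by omega) (by omega)
              have hvaR : (P:ℝ) ≤ 2*(s:ℝ) := by exact_mod_cast hv3.le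
              have hvbR : 16*(s:ℝ) ≤ 9*(P:ℝ) := by exact_mod_cast hv4
              rcases hub1 with ⟨hb1R, hu1R⟩ | ⟨hb1R, hu2aR, hu2bR⟩ | ⟨hb1R, hu3R⟩
              · exact leafU1V4 t k P B1 B2 s hPr hsR (by linarith) (by linarith) (by linarith) (by linarith) (by linarith) (by linarith) (by linarith) (by linarith) (by linarith)
              · exact leafU2V4 t k P B1 B2 s hPr hsR (by linarith) (by linarith) (by linarith) (by linarith) (by linarith) (by linarith) (by linarith) (by linarith) (by linarith) (by linarith)
              · exact leafU3V4 t k P B1 B2 s hPr hsR (by linarith) (by linarith) (by linarith) (by linarith) (by linarith) (by linarith) (by linarith) (by linarith) (by linarith)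
            · have hb2R : 5*(P:ℝ) ≤ 8*(B2:ℝ) := by
                exact_mod_cast bf_I4 m s (by omega) (by omega)
              have hvaR : 9*(P:ℝ) ≤ 16*(s:ℝ) := by exact_mod_cast hv4.le
              have hvbR : 12*(s:ℝ) ≤ 7*(P:ℝ) := by exact_mod_cast hV6.le
              rcases hub1 with ⟨hb1R, hu1R⟩ | ⟨hb1R, hu2aR, hu2bR⟩ | ⟨hb1R, hu3R⟩
              · exact leafU1V5 t k P B1 B2 s hPr hsR (by linarith) (by linarith) (by linarith) (by linarith) (by linarith) (by linarith) (by linarith) (by linarith) (by linarith)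
              · exact leafU2V5 t k P B1 B2 s hPr hsR (by linarith) (by linarith) (by linarith) (by linarith) (by linarith) (by linarith) (by linarith) (by linarith) (by linarith) (by linarith)
              · exact leafU3V5 t k P B1 B2 s hPr hsR (by linarith) (by linarith) (by linarith) (by linarith) (by linarith) (by linarith) (by linarith) (by linarith) (by linarith)
  -- conclude
  have hEBR : (((k - 2*t) + B1 + B2 : ℕ) : ℝ) ≤ (edgeBoundary (m+1) S : ℝ) := by
    exact_mod_cast hmain
  have hcast : (((k - 2*t) + B1 + B2 : ℕ) : ℝ) = ((k:ℝ) - 2*(t:ℝ)) + (B1:ℝ) + (B2:ℝ) := by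
    push_cast [Nat.cast_sub h2t]; ring
  rw [hcast] at hEBR
  rw [ge_iff_le]
  have e1 : (2:ℝ)^(m+1) * fGuu ((k:ℝ) / 2^(m+1))
      = (21*(P:ℝ)^2 - 64*((k:ℝ) - (P:ℝ))^2) / (14*(P:ℝ)) := by
    rw [fGuu]
    have hPval : (P:ℝ) = 2^m := by rw [hP]; push_cast; ring
    rw [hPval]
    have h2m : (2:ℝ)^(m+1) = 2*(2:ℝ)^m := by rw [pow_succ]; ring
    rw [h2m]
    have hne : (2:ℝ)^m ≠ 0 := by positivity
    field_simp
    ring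
  rw [e1, div_le_iff₀ (by positivity)]
  nlinarith [key2, hEBR, hPr]
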